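/- The matrix F_0 is invertible, and every complex eigenvalue of F_0 is real and lies in the interval [δ, η). -/

import Mathlib

/-- The reduced Maxwell–Stefan matrix `F₀` with entries
`[F₀] i j = -(k i j - k i n) * c i` for `i ≠ j` and
`[F₀] i i = ∑_{j ≠ i, j ≤ n-1} (k i j - k i n) * c j + c_tot * k i n`,
where `c_tot = ∑ r, c r`. The number of species is `m + 1` (the paper's `n`),
and the paper's index `n` is `Fin.last m`. -/
def MSmatF0 (m : ℕ) (k : Fin (m + 1) → Fin (m + 1) → ℝ)
    (c : Fin (m + 1) → ℝ) : Matrix (Fin m) (Fin m) ℝ :=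
  Matrix.of fun i j =>
    if i = j then
      (∑ j' ∈ Finset.univ.erase i,
          (k i.castSucc j'.castSucc - k i.castSucc (Fin.last m)) * c j'.castSucc)
        + (∑ r, c r) * k i.castSucc (Fin.last m)
    else -((k i.castSucc j.castSucc - k i.castSucc (Fin.last m)) * c i.castSucc)


open Finset in
lemma eig_of_mem_spectrum {p : ℕ} (M : Matrix (Fin p) (Fin p) ℂ) (μ : ℂ)
    (hμ : μ ∈ spectrum ℂ M) : ∃ v : Fin p → ℂ, v ≠ 0 ∧ M.mulVec v = μ • v := by
  rw [spectrum.mem_iff, Matrix.isUnit_iff_isUnit_det, isUnit_iff_ne_zero, not_not] at hμ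
  obtain ⟨v, hv0, hv⟩ := Matrix.exists_mulVec_eq_zero_iff.mpr hμ
  refine ⟨v, hv0, ?_⟩
  have h1 : (algebraMap ℂ (Matrix (Fin p) (Fin p) ℂ)) μ = μ • (1 : Matrix (Fin p) (Fin p) ℂ) :=
    Algebra.algebraMap_eq_smul_one μ
  rw [h1, Matrix.sub_mulVec, Matrix.smul_mulVec, Matrix.one_mulVec, sub_eq_zero] at hv
  exact hv.symm

open Finset in
lemma rows_of_eigen (m : ℕ) (k : Fin (m+1) → Fin (m+1) → ℝ)
    (hsymm : ∀ i j, k i j = k j i)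
    (c : Fin (m+1) → ℝ) (μ : ℂ) (x : Fin m → ℂ) (hx0 : x ≠ 0)
    (hx : ((MSmatF0 m k c).map Complex.ofReal).mulVec x = μ • x) :
    ∃ y : Fin (m+1) → ℂ, (∃ i, y i ≠ 0) ∧ (∑ i, y i = 0) ∧
      ∀ i, ∑ j, (k i j : ℂ) * ((c j : ℂ) * y i - (c i : ℂ) * y j) = μ * y i := by
  set P : ℂ := ∑ j, x j with hP
  refine ⟨Fin.snoc x (-P), ?_, ?_, ?_⟩
  · obtain ⟨i₀, hi₀⟩ := Function.ne_iff.mp hx0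
    exact ⟨i₀.castSucc, by simpa [Fin.snoc_castSucc] using hi₀⟩
  · rw [Fin.sum_univ_castSucc]
    simp [Fin.snoc_castSucc, Fin.snoc_last, hP]
  -- the row equations
  have hcs : ∀ i₀ : Fin m,
      ∑ j, (k i₀.castSucc j : ℂ) * ((c j : ℂ) * (Fin.snoc x (-P) : Fin (m+1) → ℂ) i₀.castSucc
        - (c i₀.castSucc : ℂ) * (Fin.snoc x (-P) : Fin (m+1) → ℂ) j)
      = μ * (Fin.snoc x (-P) : Fin (m+1) → ℂ) i₀.castSucc := by
    intro i₀
    -- extract row i₀ of the matrix equation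
    have h1 := congrFun hx i₀
    rw [Matrix.mulVec, dotProduct, ← Finset.add_sum_erase _ _ (mem_univ i₀)] at h1
    have hdiag : ((MSmatF0 m k c).map Complex.ofReal) i₀ i₀ =
        ((((∑ j' ∈ Finset.univ.erase i₀,
            (k i₀.castSucc j'.castSucc - k i₀.castSucc (Fin.last m)) * c j'.castSucc)
          + (∑ r, c r) * k i₀.castSucc (Fin.last m)) : ℝ) : ℂ) := by
      simp [MSmatF0, Matrix.map_apply]
    have hoff : ∀ j ∈ univ.erase i₀, ((MSmatF0 m k c).map Complex.ofReal) i₀ j * x j =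
        (((-((k i₀.castSucc j.castSucc - k i₀.castSucc (Fin.last m)) * c i₀.castSucc)) : ℝ) : ℂ) * x j := by
      intro j hj
      rw [Matrix.map_apply, show MSmatF0 m k c i₀ j =
        -((k i₀.castSucc j.castSucc - k i₀.castSucc (Fin.last m)) * c i₀.castSucc) from
        if_neg (fun h => (Finset.mem_erase.mp hj).1 h.symm)]
    rw [hdiag, Finset.sum_congr rfl hoff] at h1
    push_cast at h1
    rw [Finset.sum_erase_eq_sub (mem_univ i₀), Finset.sum_erase_eq_sub (mem_univ i₀)] at h1
    set A : ℂ := ∑ j : Fin m, (k i₀.castSucc j.castSucc : ℂ) * x j with hA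
    set B : ℂ := ∑ j : Fin m, (k i₀.castSucc j.castSucc : ℂ) * (c j.castSucc : ℂ) with hB
    set Cm : ℂ := ∑ j : Fin m, (c j.castSucc : ℂ) with hCm
    have e1 : ∑ j : Fin m, ((k i₀.castSucc j.castSucc : ℂ) - (k i₀.castSucc (Fin.last m) : ℂ))
        * (c j.castSucc : ℂ) = B - (k i₀.castSucc (Fin.last m) : ℂ) * Cm := by
      rw [hB, hCm]
      simp only [Finset.sum_mul, Finset.mul_sum, ← Finset.sum_sub_distrib]
      exact Finset.sum_congr rfl fun j _ => by ring
    have e2 : ∑ j : Fin m, -(((k i₀.castSucc j.castSucc : ℂ) - (k i₀.castSucc (Fin.last m) : ℂ))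
        * (c i₀.castSucc : ℂ)) * x j
        = (c i₀.castSucc : ℂ) * (k i₀.castSucc (Fin.last m) : ℂ) * P - (c i₀.castSucc : ℂ) * A := by
      rw [hA, hP]
      simp only [Finset.sum_mul, Finset.mul_sum, ← Finset.sum_sub_distrib]
      exact Finset.sum_congr rfl fun j _ => by ring
    have e3 : ∑ i : Fin (m+1), ((c i : ℝ) : ℂ) = Cm + (c (Fin.last m) : ℂ) :=
      Fin.sum_univ_castSucc _
    rw [e1, e2, e3] at h1
    -- now the goal
    rw [Fin.sum_univ_castSucc]
    simp only [Fin.snoc_castSucc, Fin.snoc_last]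
    have e4 : ∑ j : Fin m, (k i₀.castSucc j.castSucc : ℂ)
        * ((c j.castSucc : ℂ) * x i₀ - (c i₀.castSucc : ℂ) * x j)
        = B * x i₀ - (c i₀.castSucc : ℂ) * A := by
      rw [hA, hB]
      simp only [Finset.sum_mul, Finset.mul_sum, ← Finset.sum_sub_distrib]
      exact Finset.sum_congr rfl fun j _ => by ring
    rw [e4]
    simp only [Pi.smul_apply, smul_eq_mul] at h1
    linear_combination h1
  -- last row via symmetry
  have hWsum : ∑ i : Fin (m+1), ∑ j, (k i j : ℂ) * ((c j : ℂ) * (Fin.snoc x (-P) : Fin (m+1) → ℂ) i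
      - (c i : ℂ) * (Fin.snoc x (-P) : Fin (m+1) → ℂ) j) = 0 := by
    set y : Fin (m+1) → ℂ := Fin.snoc x (-P) with hy
    have hs : ∑ i : Fin (m+1), ∑ j, (k i j : ℂ) * ((c j : ℂ) * y i)
        = ∑ i : Fin (m+1), ∑ j, (k i j : ℂ) * ((c i : ℂ) * y j) := by
      rw [Finset.sum_comm]
      exact Finset.sum_congr rfl fun a _ => Finset.sum_congr rfl fun b _ => by
        rw [hsymm b a]
    simp only [mul_sub, Finset.sum_sub_distrib]
    rw [hs, sub_self]
  have hycs : ∑ i₀ : Fin m, (Fin.snoc x (-P) : Fin (m+1) → ℂ) i₀.castSucc = P := by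
    simp [Fin.snoc_castSucc, hP]
  intro i
  induction i using Fin.lastCases with
  | last =>
    rw [Fin.sum_univ_castSucc, Finset.sum_congr rfl (fun i₀ _ => hcs i₀)] at hWsum
    rw [← Finset.mul_sum, hycs] at hWsum
    have : (Fin.snoc x (-P) : Fin (m+1) → ℂ) (Fin.last m) = -P := Fin.snoc_last _ _
    rw [this] at hWsum ⊢
    linear_combination hWsum
  | cast i₀ => exact hcs i₀

lemma normSq_sub_le (a b : ℂ) :
    Complex.normSq (a - b) ≤ 2 * Complex.normSq a + 2 * Complex.normSq b := by
  simp only [Complex.normSq_apply, Complex.sub_re, Complex.sub_im]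
  nlinarith [sq_nonneg (a.re + b.re), sq_nonneg (a.im + b.im)]

open Finset in
lemma key_bounds (m : ℕ) (hm : 1 ≤ m)
    (k : Fin (m+1) → Fin (m+1) → ℝ)
    (hsymm : ∀ i j, k i j = k j i)
    (hkpos : ∀ i j, i ≠ j → 0 < k i j)
    (c : Fin (m+1) → ℝ) (hc : ∀ i, 0 ≤ c i)
    (cmin cmax : ℝ) (hcmin : 0 < cmin)
    (hmin : cmin ≤ ∑ i, c i) (hmax : ∑ i, c i ≤ cmax)
    (δ₀ : ℝ) (hδ₀ : IsLeast {x : ℝ | ∃ i j : Fin (m + 1), i ≠ j ∧ k i j = x} δ₀)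
    (μ : ℂ) (y : Fin (m+1) → ℂ) (hy : ∃ i, y i ≠ 0) (hsum : ∑ i, y i = 0)
    (hrow : ∀ i, ∑ j, (k i j : ℂ) * ((c j : ℂ) * y i - (c i : ℂ) * y j) = μ * y i) :
    μ.im = 0 ∧ cmin * δ₀ ≤ μ.re ∧
      μ.re < 2 * cmax * ∑ i : Fin (m+1), ∑ j ∈ Finset.univ.erase i, k i j := by
  have hδ₀pos : 0 < δ₀ := by
    obtain ⟨⟨i, j, hij, hk⟩, -⟩ := hδ₀
    exact hk ▸ hkpos i j hij
  have hδ₀le : ∀ i j, i ≠ j → δ₀ ≤ k i j := fun i j h => hδ₀.2 ⟨i, j, h, rfl⟩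
  have hctot0 : 0 < ∑ i, c i := lt_of_lt_of_le hcmin hmin
  set Sig : ℝ := ∑ i : Fin (m+1), ∑ j ∈ Finset.univ.erase i, k i j with hSig
  have hgnonneg : ∀ i : Fin (m+1), 0 ≤ ∑ j ∈ Finset.univ.erase i, k i j := by
    intro i
    exact Finset.sum_nonneg fun j hj => (hkpos i j (Ne.symm (Finset.mem_erase.mp hj).1)).le
  have hKi : ∀ i : Fin (m+1), (∑ j ∈ Finset.univ.erase i, k i j) + δ₀ ≤ Sig := by
    intro i
    obtain ⟨i', hi'⟩ := Fintype.exists_ne_of_one_lt_card (by simp; omega) i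
    have h1 : δ₀ ≤ ∑ j ∈ Finset.univ.erase i', k i' j := by
      refine le_trans (hδ₀le i' i hi') ?_
      refine Finset.single_le_sum (fun j hj => (hkpos i' j (Ne.symm (Finset.mem_erase.mp hj).1)).le) ?_
      exact Finset.mem_erase.mpr ⟨Ne.symm hi', Finset.mem_univ i⟩
    have h2 : (∑ j ∈ Finset.univ.erase i, k i j) + (∑ j ∈ Finset.univ.erase i', k i' j) ≤ Sig := by
      rw [hSig, show (∑ j ∈ Finset.univ.erase i, k i j) + (∑ j ∈ Finset.univ.erase i', k i' j)
        = ∑ a ∈ ({i, i'} : Finset (Fin (m+1))), ∑ j ∈ Finset.univ.erase a, k a j from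
        (Finset.sum_pair (f := fun a => ∑ j ∈ Finset.univ.erase a, k a j) (Ne.symm hi')).symm]
      exact Finset.sum_le_sum_of_subset_of_nonneg (Finset.subset_univ _)
        (fun a _ _ => hgnonneg a)
    linarith
  have hSd : δ₀ ≤ Sig := by
    have := hKi 0; have := hgnonneg 0; linarith
  have hcle : ∀ j, c j ≤ ∑ i, c i := fun j =>
    Finset.single_le_sum (fun i _ => hc i) (Finset.mem_univ j)
  -- final numeric step, shared by both cases
  have closer : ∀ ρ : ℝ, δ₀ * (∑ i, c i) ≤ ρ → ρ ≤ 2 * (∑ i, c i) * (Sig - δ₀) →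
      cmin * δ₀ ≤ ρ ∧ ρ < 2 * cmax * Sig := by
    intro ρ h1 h2
    constructor
    · nlinarith
    · nlinarith
  by_cases hA : ∃ i, c i = 0 ∧ y i ≠ 0
  · obtain ⟨i, hci, hyi⟩ := hA
    have h := hrow i
    simp only [hci, Complex.ofReal_zero, zero_mul, sub_zero] at h
    have h2 : (∑ j, (k i j : ℂ) * (c j : ℂ)) * y i = μ * y i := by
      rw [Finset.sum_mul]
      rw [Finset.sum_congr rfl fun j _ => (mul_assoc ((k i j : ℂ)) _ _)]
      exact h
    have hμ : μ = ∑ j, (k i j : ℂ) * (c j : ℂ) :=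
      (mul_right_cancel₀ hyi h2).symm
    set r : ℝ := ∑ j, k i j * c j with hr
    have hμr : μ = (r : ℂ) := by rw [hμ, hr]; push_cast; rfl
    have him : μ.im = 0 := by rw [hμr]; exact Complex.ofReal_im r
    have hre : μ.re = r := by rw [hμr]; exact Complex.ofReal_re r
    have hlow : δ₀ * (∑ i, c i) ≤ r := by
      rw [hr, Finset.mul_sum]
      refine Finset.sum_le_sum fun j _ => ?_
      rcases eq_or_ne j i with rfl | hji
      · rw [hci]; simp
      · exact mul_le_mul_of_nonneg_right (hδ₀le i j (Ne.symm hji)) (hc j)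
    have hup : r ≤ 2 * (∑ i, c i) * (Sig - δ₀) := by
      have e : r = ∑ j ∈ Finset.univ.erase i, k i j * c j := by
        rw [hr]; exact (Finset.sum_erase _ (by rw [hci, mul_zero])).symm
      have h3 : r ≤ (∑ j ∈ Finset.univ.erase i, k i j) * (∑ i, c i) := by
        rw [e, Finset.sum_mul]
        refine Finset.sum_le_sum fun j hj => ?_
        exact mul_le_mul_of_nonneg_left (hcle j)
          (hkpos i j (Ne.symm (Finset.mem_erase.mp hj).1)).le
      nlinarith [hKi i, hgnonneg i]
    rw [him, hre]
    exact ⟨rfl, closer r hlow hup⟩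
  · push_neg at hA
    -- here hA : ∀ i, c i = 0 → y i = 0
    set x : Fin (m+1) → ℂ := fun i => y i / (c i : ℂ) with hxdef
    have hfx : ∀ i, (c i : ℂ) * x i = y i := by
      intro i
      by_cases h : c i = 0
      · simp [hxdef, h, hA i h]
      · rw [hxdef]
        field_simp
        exact mul_div_cancel_left₀ _ (Complex.ofReal_ne_zero.mpr h)
    simp only [← hfx] at hrow hsum hy
    -- positivity of T
    set T : ℝ := ∑ i, c i * Complex.normSq (x i) with hT
    have hTpos : 0 < T := by
      obtain ⟨i₀, hyi₀⟩ := hy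
      have hci₀ : c i₀ ≠ 0 := by
        intro h0
        exact hyi₀ (by rw [h0]; simp)
      have hxi₀ : x i₀ ≠ 0 := by
        intro h0
        exact hyi₀ (by rw [h0, mul_zero])
      refine Finset.sum_pos' (fun i _ => mul_nonneg (hc i) (Complex.normSq_nonneg _)) ⟨i₀, Finset.mem_univ i₀, ?_⟩
      exact mul_pos ((hc i₀).lt_of_ne (Ne.symm hci₀)) (Complex.normSq_pos.mpr hxi₀)
    have hTC : (T : ℂ) = ∑ i, (c i : ℂ) * (x i * (starRingEnd ℂ) (x i)) := by
      rw [hT]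
      push_cast
      exact Finset.sum_congr rfl fun i _ => by rw [Complex.mul_conj]
    -- the quadratic form identity
    set S : ℂ := ∑ i, ∑ j, (k i j : ℂ) * (c i : ℂ) * (c j : ℂ)
        * ((starRingEnd ℂ) (x i) * (x i - x j)) with hSdef
    have hS : μ * (T : ℂ) = S := by
      calc μ * (T : ℂ) = ∑ i, (starRingEnd ℂ) (x i) * (μ * ((c i : ℂ) * x i)) := by
            rw [hTC, Finset.mul_sum]
            exact Finset.sum_congr rfl fun i _ => by ring
        _ = ∑ i, (starRingEnd ℂ) (x i)
              * (∑ j, (k i j : ℂ) * ((c j : ℂ) * ((c i : ℂ) * x i) - (c i : ℂ) * ((c j : ℂ) * x j))) :=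
            Finset.sum_congr rfl fun i _ => by rw [hrow i]
        _ = S := by
            rw [hSdef]
            refine Finset.sum_congr rfl fun i _ => ?_
            rw [Finset.mul_sum]
            exact Finset.sum_congr rfl fun j _ => by ring
    have hswap : S = ∑ i, ∑ j, (k i j : ℂ) * (c i : ℂ) * (c j : ℂ)
        * ((starRingEnd ℂ) (x j) * (x j - x i)) := by
      rw [hSdef, Finset.sum_comm]
      refine Finset.sum_congr rfl fun a _ => Finset.sum_congr rfl fun b _ => ?_
      rw [hsymm b a]
      ring
    set R : ℝ := ∑ i, ∑ j, k i j * (c i * c j * Complex.normSq (x i - x j)) with hR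
    have h2S : 2 * (μ * (T : ℂ)) = (R : ℂ) := by
      calc 2 * (μ * (T : ℂ)) = S + S := by rw [hS]; ring
        _ = ∑ i, ∑ j, (k i j : ℂ) * (c i : ℂ) * (c j : ℂ)
              * ((x i - x j) * (starRingEnd ℂ) (x i - x j)) := by
            nth_rewrite 2 [hswap]
            rw [hSdef]
            simp only [← Finset.sum_add_distrib]
            refine Finset.sum_congr rfl fun i _ => Finset.sum_congr rfl fun j _ => ?_
            rw [map_sub]
            ring
        _ = (R : ℂ) := by
            rw [hR]
            push_cast
            refine Finset.sum_congr rfl fun i _ => Finset.sum_congr rfl fun j _ => ?_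
            rw [Complex.mul_conj]
            ring
    have hTne : (2 * (T : ℂ)) ≠ 0 := by
      simp only [ne_eq, mul_eq_zero]
      push_neg
      exact ⟨two_ne_zero, Complex.ofReal_ne_zero.mpr hTpos.ne'⟩
    have hμ : μ = ((R / (2 * T) : ℝ) : ℂ) := by
      rw [Complex.ofReal_div, Complex.ofReal_mul, Complex.ofReal_ofNat, eq_div_iff hTne]
      linear_combination h2S
    have him : μ.im = 0 := by rw [hμ]; exact Complex.ofReal_im _
    have hre : μ.re = R / (2 * T) := by rw [hμ]; exact Complex.ofReal_re _
    -- the expansion identity: ∑∑ c c |x i - x j|² = 2 ctot T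
    have hz0 : ∑ i, (c i : ℂ) * x i = 0 := hsum
    have hz0' : ∑ i, (c i : ℂ) * (starRingEnd ℂ) (x i) = 0 := by
      have := congrArg (starRingEnd ℂ) hz0
      rw [map_sum] at this
      simpa [map_mul, Complex.conj_ofReal] using this
    have hQ : ∑ i, ∑ j, c i * c j * Complex.normSq (x i - x j)
        = 2 * (∑ i, c i) * T := by
      have hE : ∑ i, ∑ j, (c i : ℂ) * (c j : ℂ) * ((x i - x j) * (starRingEnd ℂ) (x i - x j))
          = 2 * (∑ i, (c i : ℂ)) * (T : ℂ) := by
        have expand : ∀ i j : Fin (m+1), (c i : ℂ) * (c j : ℂ)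
            * ((x i - x j) * (starRingEnd ℂ) (x i - x j))
            = ((c i : ℂ) * (x i * (starRingEnd ℂ) (x i))) * (c j : ℂ)
              + (c i : ℂ) * ((c j : ℂ) * (x j * (starRingEnd ℂ) (x j)))
              - ((c i : ℂ) * x i) * ((c j : ℂ) * (starRingEnd ℂ) (x j))
              - ((c i : ℂ) * (starRingEnd ℂ) (x i)) * ((c j : ℂ) * x j) := by
          intro i j
          rw [map_sub]
          ring
        rw [Finset.sum_congr rfl fun i _ => Finset.sum_congr rfl fun j _ => expand i j]
        simp only [Finset.sum_add_distrib, Finset.sum_sub_distrib,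
          ← Finset.sum_mul, ← Finset.mul_sum]
        rw [hz0, hz0', ← hTC]
        ring
      have hcast : ((∑ i, ∑ j, c i * c j * Complex.normSq (x i - x j) : ℝ) : ℂ)
          = ((2 * (∑ i, c i) * T : ℝ) : ℂ) := by
        push_cast
        rw [← hE]
        refine Finset.sum_congr rfl fun i _ => Finset.sum_congr rfl fun j _ => ?_
        rw [Complex.mul_conj]
      exact_mod_cast hcast
    -- lower bound for R
    have hRlow : δ₀ * (2 * (∑ i, c i) * T) ≤ R := by
      rw [← hQ, hR, Finset.mul_sum]
      refine Finset.sum_le_sum fun i _ => ?_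
      rw [Finset.mul_sum]
      refine Finset.sum_le_sum fun j _ => ?_
      rcases eq_or_ne i j with rfl | hij
      · simp
      · exact mul_le_mul_of_nonneg_right (hδ₀le i j hij)
          (mul_nonneg (mul_nonneg (hc i) (hc j)) (Complex.normSq_nonneg _))
    -- upper bound for R
    set kk : Fin (m+1) → Fin (m+1) → ℝ := fun i j => if i = j then 0 else k i j with hkk
    have hkknn : ∀ i j, 0 ≤ kk i j := by
      intro i j
      rw [hkk]
      rcases eq_or_ne i j with rfl | h
      · simp
      · simpa [h] using (hkpos i j h).le
    have hkksymm : ∀ i j, kk j i = kk i j := by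
      intro i j
      rw [hkk]
      rcases eq_or_ne i j with rfl | h
      · rfl
      · simp [h, h.symm, hsymm i j]
    have hstep1 : R ≤ ∑ i, ∑ j, kk i j * (c i * c j * (2 * Complex.normSq (x i) + 2 * Complex.normSq (x j))) := by
      rw [hR]
      refine Finset.sum_le_sum fun i _ => Finset.sum_le_sum fun j _ => ?_
      rcases eq_or_ne i j with rfl | hij
      · simp [hkk]
      · rw [hkk]
        simp only [hij, if_neg hij]
        refine mul_le_mul_of_nonneg_left ?_ (hkpos i j hij).le
        refine mul_le_mul_of_nonneg_left (normSq_sub_le _ _) (mul_nonneg (hc i) (hc j))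
    have hU : ∀ i : Fin (m+1), ∑ j, kk i j * c j ≤ (∑ i, c i) * (Sig - δ₀) := by
      intro i
      have e : ∑ j, kk i j * c j ≤ ∑ j, kk i j * (∑ r, c r) :=
        Finset.sum_le_sum fun j _ => mul_le_mul_of_nonneg_left (hcle j) (hkknn i j)
      have e2 : ∑ j, kk i j * (∑ r, c r) = (∑ j ∈ Finset.univ.erase i, k i j) * (∑ r, c r) := by
        rw [← Finset.sum_mul]
        congr 1
        rw [show (∑ j, kk i j) = ∑ j ∈ Finset.univ.erase i, kk i j from
          (Finset.sum_erase _ (by rw [hkk]; simp)).symm]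
        refine Finset.sum_congr rfl fun j hj => ?_
        rw [hkk]
        simp [Ne.symm (Finset.mem_erase.mp hj).1]
      have e3 : (∑ j ∈ Finset.univ.erase i, k i j) * (∑ r, c r) ≤ (Sig - δ₀) * (∑ r, c r) := by
        refine mul_le_mul_of_nonneg_right ?_ hctot0.le
        have := hKi i
        linarith
      calc ∑ j, kk i j * c j ≤ ∑ j, kk i j * (∑ r, c r) := e
        _ = (∑ j ∈ Finset.univ.erase i, k i j) * (∑ r, c r) := e2
        _ ≤ (Sig - δ₀) * (∑ r, c r) := e3
        _ = (∑ i, c i) * (Sig - δ₀) := by ring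
    have hRup : R ≤ 4 * ((∑ i, c i) * (Sig - δ₀)) * T := by
      have split : ∑ i, ∑ j, kk i j * (c i * c j * (2 * Complex.normSq (x i) + 2 * Complex.normSq (x j)))
          = 4 * ∑ i, (c i * Complex.normSq (x i)) * (∑ j, kk i j * c j) := by
        have swap2 : ∑ i, ∑ j, kk i j * (c i * c j * Complex.normSq (x j))
            = ∑ i, ∑ j, kk i j * (c i * c j * Complex.normSq (x i)) := by
          rw [Finset.sum_comm]
          refine Finset.sum_congr rfl fun a _ => Finset.sum_congr rfl fun b _ => ?_
          rw [hkksymm b a]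
          ring
        calc ∑ i, ∑ j, kk i j * (c i * c j * (2 * Complex.normSq (x i) + 2 * Complex.normSq (x j)))
            = ∑ i, ∑ j, (2 * (kk i j * (c i * c j * Complex.normSq (x i)))
              + 2 * (kk i j * (c i * c j * Complex.normSq (x j)))) := by
              refine Finset.sum_congr rfl fun i _ => Finset.sum_congr rfl fun j _ => by ring
          _ = 2 * (∑ i, ∑ j, kk i j * (c i * c j * Complex.normSq (x i)))
              + 2 * (∑ i, ∑ j, kk i j * (c i * c j * Complex.normSq (x j))) := by
              simp only [Finset.sum_add_distrib, Finset.mul_sum]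
          _ = 4 * ∑ i, ∑ j, kk i j * (c i * c j * Complex.normSq (x i)) := by
              rw [swap2]; ring
          _ = 4 * ∑ i, (c i * Complex.normSq (x i)) * (∑ j, kk i j * c j) := by
              congr 1
              refine Finset.sum_congr rfl fun i _ => ?_
              rw [Finset.mul_sum]
              exact Finset.sum_congr rfl fun j _ => by ring
      have final : ∑ i, (c i * Complex.normSq (x i)) * (∑ j, kk i j * c j)
          ≤ ((∑ i, c i) * (Sig - δ₀)) * T := by
        have hrhs : ((∑ i, c i) * (Sig - δ₀)) * T
            = ∑ i, (c i * Complex.normSq (x i)) * ((∑ r, c r) * (Sig - δ₀)) := by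
          rw [hT, mul_comm, Finset.sum_mul]
        rw [hrhs]
        exact Finset.sum_le_sum fun i _ => mul_le_mul_of_nonneg_left (hU i)
          (mul_nonneg (hc i) (Complex.normSq_nonneg _))
      calc R ≤ _ := hstep1
        _ = 4 * ∑ i, (c i * Complex.normSq (x i)) * (∑ j, kk i j * c j) := split
        _ ≤ 4 * (((∑ i, c i) * (Sig - δ₀)) * T) := by linarith
        _ = 4 * ((∑ i, c i) * (Sig - δ₀)) * T := by ring
    -- conclude
    refine ⟨him, ?_, ?_⟩
    · rw [hre, le_div_iff₀ (by linarith)]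
      have pos : 0 ≤ δ₀ * T * ((∑ i, c i) - cmin) :=
        mul_nonneg (mul_nonneg hδ₀pos.le hTpos.le) (by linarith)
      nlinarith [hRlow]
    · rw [hre, div_lt_iff₀ (by linarith)]
      have hcmax0 : 0 < cmax := lt_of_lt_of_le hcmin (le_trans hmin hmax)
      have e1 : (∑ i, c i) * (Sig - δ₀) < cmax * Sig := by
        nlinarith [mul_le_mul_of_nonneg_right hmax (by linarith : (0:ℝ) ≤ Sig - δ₀),
          mul_pos hcmax0 hδ₀pos]
      have e2 : 4 * ((∑ i, c i) * (Sig - δ₀)) * T < 2 * cmax * Sig * (2 * T) := by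
        nlinarith [mul_lt_mul_of_pos_right e1 (show (0:ℝ) < 4 * T by linarith)]
      linarith [hRup]


/-- `F₀` is invertible, and every complex eigenvalue of `F₀`
is real and lies in `[δ, η)`, where `δ = c_min · min_{i ≠ j} k i j` and
`η = 2 c_max ∑_{i ≠ j} k i j`. -/
theorem F0_invertible_and_spectrum
    (m : ℕ) (hm : 1 ≤ m)
    (k : Fin (m + 1) → Fin (m + 1) → ℝ)
    (hsymm : ∀ i j, k i j = k j i)
    (hkpos : ∀ i j, i ≠ j → 0 < k i j)
    (c : Fin (m + 1) → ℝ)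
    (hc : ∀ i, 0 ≤ c i)
    (cmin cmax : ℝ)
    (hcmin : 0 < cmin)
    (hmin : cmin ≤ ∑ i, c i)
    (hmax : ∑ i, c i ≤ cmax)
    (δ₀ : ℝ)
    (hδ₀ : IsLeast {x : ℝ | ∃ i j : Fin (m + 1), i ≠ j ∧ k i j = x} δ₀)
    (δ η : ℝ)
    (hδ : δ = cmin * δ₀)
    (hη : η = 2 * cmax * ∑ i : Fin (m + 1), ∑ j ∈ Finset.univ.erase i, k i j) :
    IsUnit (MSmatF0 m k c)
      ∧ ∀ μ ∈ spectrum ℂ ((MSmatF0 m k c).map Complex.ofReal),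
          μ.im = 0 ∧ δ ≤ μ.re ∧ μ.re < η := by
  have hspec : ∀ μ ∈ spectrum ℂ ((MSmatF0 m k c).map Complex.ofReal),
      μ.im = 0 ∧ δ ≤ μ.re ∧ μ.re < η := by
    intro μ hμ
    obtain ⟨v, hv0, hv⟩ := eig_of_mem_spectrum _ μ hμ
    obtain ⟨y, hy, hysum, hrow⟩ := rows_of_eigen m k hsymm c μ v hv0 hv
    have H := key_bounds m hm k hsymm hkpos c hc cmin cmax hcmin hmin hmax δ₀ hδ₀
      μ y hy hysum hrow
    rw [hδ, hη]
    exact H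
  refine ⟨?_, hspec⟩
  rw [Matrix.isUnit_iff_isUnit_det, isUnit_iff_ne_zero]
  intro hdet
  have h0 : (0 : ℂ) ∈ spectrum ℂ ((MSmatF0 m k c).map Complex.ofReal) := by
    rw [spectrum.mem_iff, map_zero, zero_sub, Matrix.isUnit_iff_isUnit_det,
      isUnit_iff_ne_zero, not_not, Matrix.det_neg]
    have h2 : (((MSmatF0 m k c).map Complex.ofReal).det) = Complex.ofReal (MSmatF0 m k c).det := by
      have := RingHom.map_det Complex.ofRealHom (MSmatF0 m k c)
      rw [RingHom.mapMatrix_apply] at this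
      exact_mod_cast this.symm
    rw [h2, hdet]
    simp
  have H := hspec 0 h0
  have hδ₀pos : 0 < δ₀ := by
    obtain ⟨⟨i, j, hij, hk⟩, -⟩ := hδ₀
    exact hk ▸ hkpos i j hij
  have : δ ≤ 0 := by simpa using H.2.1
  rw [hδ] at this
  nlinarith
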